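/- Define H: ℝ → ℝ by H(t) = 0 for t ≤ 0 and H(t) = exp(-1/t^γ) for t > 0, where γ ∈ (0,1). Then H is twice continuously differentiable, H'(0) = H''(0) = 0, and for all t ∈ ℝ: |t·H'(t)| ≤ γ/e and |t²·H''(t)| ≤ 4γ/e. -/

import Mathlib

open Real Filter Set Topology

lemma aux_ue (u : ℝ) (hu : 0 ≤ u) : u * Real.exp (-u) ≤ (Real.exp 1)⁻¹ := by
  have h : u ≤ Real.exp (u - 1) := by
    have := Real.add_one_le_exp (u - 1); linarith
  calc u * Real.exp (-u) ≤ Real.exp (u - 1) * Real.exp (-u) :=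
        mul_le_mul_of_nonneg_right h (Real.exp_pos _).le
    _ = (Real.exp 1)⁻¹ := by
        rw [← Real.exp_add, ← Real.exp_neg]; ring_nf

lemma aux_u2e (u : ℝ) (hu : 0 ≤ u) : u ^ 2 * Real.exp (-u) ≤ 4 * (Real.exp 1)⁻¹ ^ 2 := by
  have h := aux_ue (u / 2) (by linarith)
  have h0 : 0 ≤ u / 2 * Real.exp (-(u / 2)) :=
    mul_nonneg (by linarith) (Real.exp_pos _).le
  have hsq : (u / 2 * Real.exp (-(u / 2))) ^ 2 ≤ ((Real.exp 1)⁻¹) ^ 2 := by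
    exact pow_le_pow_left₀ h0 h 2
  have e2 : Real.exp (-(u / 2)) ^ 2 = Real.exp (-u) := by
    rw [sq, ← Real.exp_add]; ring_nf
  nlinarith [Real.exp_pos (-u)]

lemma aux_tlim (γ c : ℝ) (hγ : 0 < γ) :
    Tendsto (fun t : ℝ => Real.exp (-(t ^ (-γ))) * t ^ c) (𝓝[>] (0:ℝ)) (𝓝 0) := by
  have h1 : Tendsto (fun t : ℝ => t ^ γ) (𝓝[>] (0:ℝ)) (𝓝[>] (0:ℝ)) := by
    rw [tendsto_nhdsWithin_iff]
    constructor
    · have hc : ContinuousAt (fun t : ℝ => t ^ γ) 0 :=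
        Real.continuousAt_rpow_const 0 γ (Or.inr hγ.le)
      have h0 : Tendsto (fun t : ℝ => t ^ γ) (𝓝[>] (0:ℝ)) (𝓝 ((0:ℝ) ^ γ)) :=
        hc.tendsto.mono_left nhdsWithin_le_nhds
      simpa [Real.zero_rpow hγ.ne'] using h0
    · filter_upwards [self_mem_nhdsWithin] with t ht
      exact Real.rpow_pos_of_pos ht γ
  have h2 : Tendsto (fun t : ℝ => t ^ (-γ)) (𝓝[>] (0:ℝ)) atTop := by
    refine (tendsto_inv_nhdsGT_zero.comp h1).congr' ?_
    filter_upwards [self_mem_nhdsWithin] with t ht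
    simp [Function.comp, Real.rpow_neg (le_of_lt ht)]
  have h3 := (tendsto_rpow_mul_exp_neg_mul_atTop_nhds_zero (-c / γ) 1 one_pos).comp h2
  refine h3.congr' ?_
  filter_upwards [self_mem_nhdsWithin] with t ht
  have ht' : (0:ℝ) < t := ht
  simp only [Function.comp]
  have hpow : (t ^ (-γ)) ^ (-c / γ) = t ^ c := by
    rw [← Real.rpow_mul ht'.le]
    congr 1
    field_simp
  rw [hpow, neg_one_mul, mul_comm]

theorem stmt_12 (γ : ℝ) (hγ0 : 0 < γ) (hγ1 : γ < 1) (H : ℝ → ℝ)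
    (hH : ∀ t : ℝ, H t = if t ≤ 0 then 0 else Real.exp (-1 / t ^ γ)) :
    ContDiff ℝ 2 H ∧ deriv H 0 = 0 ∧ deriv (deriv H) 0 = 0 ∧
      (∀ t : ℝ, |t * deriv H t| ≤ γ / Real.exp 1) ∧
      (∀ t : ℝ, |t ^ 2 * deriv (deriv H) t| ≤ 4 * γ / Real.exp 1) := by
  set D1 : ℝ → ℝ := fun t => if t ≤ 0 then 0
    else Real.exp (-(t ^ (-γ))) * (γ * t ^ (-γ - 1)) with hD1def
  set D2 : ℝ → ℝ := fun t => if t ≤ 0 then 0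
    else Real.exp (-(t ^ (-γ))) * (γ * t ^ (-γ - 1)) * (γ * t ^ (-γ - 1)) +
      Real.exp (-(t ^ (-γ))) * (γ * ((-γ - 1) * t ^ (-γ - 1 - 1))) with hD2def
  -- H on the positive side
  have hHpos : ∀ t : ℝ, 0 < t → H t = Real.exp (-(t ^ (-γ))) := by
    intro t ht
    rw [hH, if_neg (not_le.2 ht)]
    congr 1
    rw [Real.rpow_neg ht.le]
    ring
  have hHneg : ∀ t : ℝ, t ≤ 0 → H t = 0 := fun t ht => by rw [hH, if_pos ht]
  -- derivative of H away from 0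
  have hd1 : ∀ t : ℝ, t ≠ 0 → HasDerivAt H (D1 t) t := by
    intro t ht
    rcases ht.lt_or_gt with ht | ht
    · have heq : H =ᶠ[𝓝 t] fun _ => (0:ℝ) :=
        eventuallyEq_of_mem (Iio_mem_nhds ht) fun s hs => hHneg s (le_of_lt (mem_Iio.1 hs))
      have : HasDerivAt (fun _ : ℝ => (0:ℝ)) 0 t := hasDerivAt_const t 0
      have h2 := this.congr_of_eventuallyEq heq
      simpa [hD1def, if_pos ht.le] using h2
    · have hbase : HasDerivAt (fun s : ℝ => -(s ^ (-γ))) (γ * t ^ (-γ - 1)) t := by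
        have := (Real.hasDerivAt_rpow_const (x := t) (p := -γ) (Or.inl ht.ne')).neg
        exact this.congr_deriv (by ring)
      have hexp := hbase.exp
      have heq : H =ᶠ[𝓝 t] fun s : ℝ => Real.exp (-(s ^ (-γ))) :=
        eventuallyEq_of_mem (Ioi_mem_nhds ht) fun s hs => hHpos s hs
      have h2 := hexp.congr_of_eventuallyEq heq
      simpa [hD1def, if_neg (not_le.2 ht)] using h2
  -- derivative of D1 away from 0
  have hd2 : ∀ t : ℝ, t ≠ 0 → HasDerivAt D1 (D2 t) t := by
    intro t ht
    rcases ht.lt_or_gt with ht | ht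
    · have heq : D1 =ᶠ[𝓝 t] fun _ => (0:ℝ) :=
        eventuallyEq_of_mem (Iio_mem_nhds ht) fun s hs => by
          simp [hD1def, if_pos (le_of_lt (mem_Iio.1 hs))]
      have : HasDerivAt (fun _ : ℝ => (0:ℝ)) 0 t := hasDerivAt_const t 0
      have h2 := this.congr_of_eventuallyEq heq
      simpa [hD2def, if_pos ht.le] using h2
    · have hbase : HasDerivAt (fun s : ℝ => -(s ^ (-γ))) (γ * t ^ (-γ - 1)) t := by
        have := (Real.hasDerivAt_rpow_const (x := t) (p := -γ) (Or.inl ht.ne')).neg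
        exact this.congr_deriv (by ring)
      have hexp := hbase.exp
      have hpow2 : HasDerivAt (fun s : ℝ => γ * s ^ (-γ - 1))
          (γ * ((-γ - 1) * t ^ (-γ - 1 - 1))) t :=
        (Real.hasDerivAt_rpow_const (x := t) (p := -γ - 1) (Or.inl ht.ne')).const_mul γ
      have hmul := hexp.mul hpow2
      have heq : D1 =ᶠ[𝓝 t] fun s : ℝ => Real.exp (-(s ^ (-γ))) * (γ * s ^ (-γ - 1)) :=
        eventuallyEq_of_mem (Ioi_mem_nhds ht) fun s hs => by
          simp [hD1def, if_neg (not_le.2 (mem_Ioi.1 hs))]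
      have h2 := hmul.congr_of_eventuallyEq heq
      simpa [hD2def, if_neg (not_le.2 ht)] using h2
  -- continuity at 0
  have hcH : ContinuousAt H 0 := by
    rw [ContinuousAt, hHneg 0 le_rfl]
    have key : Tendsto H (𝓝[≤] (0:ℝ) ⊔ 𝓝[>] (0:ℝ)) (𝓝 0) := by
      rw [tendsto_sup]
      constructor
      · refine Tendsto.congr' ?_ tendsto_const_nhds
        filter_upwards [self_mem_nhdsWithin] with s hs
        exact (hHneg s hs).symm
      · have := aux_tlim γ 0 hγ0
        refine this.congr' ?_
        filter_upwards [self_mem_nhdsWithin] with s hs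
        rw [Real.rpow_zero, mul_one, hHpos s hs]
    rwa [nhdsLE_sup_nhdsGT] at key
  have hcD1 : ContinuousAt D1 0 := by
    have h0 : D1 0 = 0 := by simp [hD1def]
    rw [ContinuousAt, h0]
    have key : Tendsto D1 (𝓝[≤] (0:ℝ) ⊔ 𝓝[>] (0:ℝ)) (𝓝 0) := by
      rw [tendsto_sup]
      constructor
      · refine Tendsto.congr' ?_ tendsto_const_nhds
        filter_upwards [self_mem_nhdsWithin] with s hs
        exact (if_pos (mem_Iic.1 hs)).symm
      · have h := (aux_tlim γ (-γ - 1) hγ0).const_mul γ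
        rw [mul_zero] at h
        refine h.congr' ?_
        filter_upwards [self_mem_nhdsWithin] with s hs
        simp only [hD1def, if_neg (not_le.2 (mem_Ioi.1 hs))]
        ring
    rwa [nhdsLE_sup_nhdsGT] at key
  have hcD2 : ContinuousAt D2 0 := by
    have h0 : D2 0 = 0 := by simp [hD2def]
    rw [ContinuousAt, h0]
    have key : Tendsto D2 (𝓝[≤] (0:ℝ) ⊔ 𝓝[>] (0:ℝ)) (𝓝 0) := by
      rw [tendsto_sup]
      constructor
      · refine Tendsto.congr' ?_ tendsto_const_nhds
        filter_upwards [self_mem_nhdsWithin] with s hs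
        exact (if_pos (mem_Iic.1 hs)).symm
      · have h1 := (aux_tlim γ (-γ - 1 + (-γ - 1)) hγ0).const_mul (γ * γ)
        have h2 := (aux_tlim γ (-γ - 1 - 1) hγ0).const_mul (γ * (-γ - 1))
        rw [mul_zero] at h1 h2
        have h := h1.add h2
        rw [add_zero] at h
        refine h.congr' ?_
        filter_upwards [self_mem_nhdsWithin] with s hs
        have hs' : (0:ℝ) < s := hs
        simp only [hD2def, if_neg (not_le.2 hs')]
        rw [Real.rpow_add hs']
        ring
    rwa [nhdsLE_sup_nhdsGT] at key
  -- derivatives everywhere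
  have hd1' : ∀ t : ℝ, HasDerivAt H (D1 t) t := by
    intro t
    rcases eq_or_ne t 0 with rfl | ht
    · exact hasDerivAt_of_hasDerivAt_of_ne hd1 hcH hcD1
    · exact hd1 t ht
  have hd2' : ∀ t : ℝ, HasDerivAt D1 (D2 t) t := by
    intro t
    rcases eq_or_ne t 0 with rfl | ht
    · exact hasDerivAt_of_hasDerivAt_of_ne hd2 hcD1 hcD2
    · exact hd2 t ht
  have hderivH : deriv H = D1 := funext fun t => (hd1' t).deriv
  have hderivD1 : deriv D1 = D2 := funext fun t => (hd2' t).deriv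
  -- continuity of D2 everywhere
  have hcontD2 : Continuous D2 := by
    rw [continuous_iff_continuousAt]
    intro t
    rcases lt_trichotomy t 0 with ht | rfl | ht
    · have heq : D2 =ᶠ[𝓝 t] fun _ => (0:ℝ) :=
        eventuallyEq_of_mem (Iio_mem_nhds ht) fun s hs => by
          simp [hD2def, if_pos (le_of_lt (mem_Iio.1 hs))]
      exact ContinuousAt.congr_of_eventuallyEq continuousAt_const heq
    · exact hcD2
    · have heq : D2 =ᶠ[𝓝 t] fun s : ℝ =>
          Real.exp (-(s ^ (-γ))) * (γ * s ^ (-γ - 1)) * (γ * s ^ (-γ - 1)) +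
            Real.exp (-(s ^ (-γ))) * (γ * ((-γ - 1) * s ^ (-γ - 1 - 1))) :=
        eventuallyEq_of_mem (Ioi_mem_nhds ht) fun s hs => by
          simp [hD2def, if_neg (not_le.2 (mem_Ioi.1 hs))]
      have c1 : ContinuousAt (fun s : ℝ => s ^ (-γ)) t :=
        Real.continuousAt_rpow_const t _ (Or.inl ht.ne')
      have c2 : ContinuousAt (fun s : ℝ => s ^ (-γ - 1)) t :=
        Real.continuousAt_rpow_const t _ (Or.inl ht.ne')
      have c3 : ContinuousAt (fun s : ℝ => s ^ (-γ - 1 - 1)) t :=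
        Real.continuousAt_rpow_const t _ (Or.inl ht.ne')
      have cexp : ContinuousAt (fun s : ℝ => Real.exp (-(s ^ (-γ)))) t :=
        Real.continuous_exp.continuousAt.comp c1.neg
      exact ContinuousAt.congr_of_eventuallyEq
        (((cexp.mul (c2.const_mul γ)).mul (c2.const_mul γ)).add
          (cexp.mul ((c3.const_mul (-γ - 1)).const_mul γ))) heq
  -- smoothness
  have hsmooth : ContDiff ℝ 2 H := by
    rw [show (2 : WithTop ℕ∞) = 1 + 1 by rfl, contDiff_succ_iff_deriv]
    refine ⟨fun t => (hd1' t).differentiableAt, by simp, ?_⟩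
    rw [hderivH, contDiff_one_iff_deriv, hderivD1]
    exact ⟨fun t => (hd2' t).differentiableAt, hcontD2⟩
  -- rpow facts for the bounds
  have hE2 : (2:ℝ) ≤ Real.exp 1 := by
    have := Real.add_one_le_exp 1; linarith
  have hEpos : (0:ℝ) < Real.exp 1 := Real.exp_pos 1
  refine ⟨hsmooth, ?_, ?_, ?_, ?_⟩
  · rw [hderivH]; simp [hD1def]
  · rw [hderivH, hderivD1]; simp [hD2def]
  · intro t
    rw [hderivH]
    rcases le_or_gt t 0 with ht | ht
    · simp only [hD1def, if_pos ht, mul_zero, abs_zero]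
      positivity
    · have hu : (0:ℝ) < t ^ (-γ) := Real.rpow_pos_of_pos ht _
      have k1 : t ^ (-γ - 1) = t ^ (-γ) * t⁻¹ := by
        rw [show -γ - 1 = -γ + (-1) by ring, Real.rpow_add ht, Real.rpow_neg_one]
      have heq : t * D1 t = γ * (t ^ (-γ) * Real.exp (-(t ^ (-γ)))) := by
        simp only [hD1def, if_neg (not_le.2 ht), k1]
        field_simp
      rw [heq, abs_of_nonneg (by positivity)]
      have := aux_ue (t ^ (-γ)) hu.le
      rw [div_eq_mul_inv]
      exact mul_le_mul_of_nonneg_left this hγ0.le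
  · intro t
    rw [hderivH, hderivD1]
    rcases le_or_gt t 0 with ht | ht
    · simp only [hD2def, if_pos ht, mul_zero, abs_zero]
      positivity
    · set u : ℝ := t ^ (-γ) with hudef
      set e : ℝ := Real.exp (-u) with hedef
      have hu : (0:ℝ) < u := Real.rpow_pos_of_pos ht _
      have hepos : (0:ℝ) < e := Real.exp_pos _
      have k1 : t ^ (-γ - 1) = u * t⁻¹ := by
        rw [show -γ - 1 = -γ + (-1) by ring, Real.rpow_add ht, Real.rpow_neg_one]
      have k2 : t ^ (-γ - 1 - 1) = u * t⁻¹ * t⁻¹ := by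
        rw [show -γ - 1 - 1 = -γ + (-1) + (-1) by ring, Real.rpow_add ht,
          Real.rpow_add ht, Real.rpow_neg_one]
      have heq : t ^ 2 * D2 t = γ ^ 2 * (u ^ 2 * e) + γ * (-γ - 1) * (u * e) := by
        simp only [hD2def, if_neg (not_le.2 ht), k1, k2]
        field_simp
        ring
      rw [heq]
      have B1 : u * e ≤ (Real.exp 1)⁻¹ := aux_ue u hu.le
      have B2 : u ^ 2 * e ≤ 4 * (Real.exp 1)⁻¹ ^ 2 := aux_u2e u hu.le
      have hvpos : (0:ℝ) < (Real.exp 1)⁻¹ := by positivity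
      have hvle : (Real.exp 1)⁻¹ ≤ 1 / 2 := by
        have h := inv_anti₀ (by norm_num : (0:ℝ) < 2) hE2
        norm_num at h
        linarith
      have hue : 0 ≤ u * e := by positivity
      have hu2e : 0 ≤ u ^ 2 * e := by positivity
      set v : ℝ := (Real.exp 1)⁻¹ with hvdef
      have hγv : γ * v ≤ 1 / 2 := by
        calc γ * v ≤ 1 * v := mul_le_mul_of_nonneg_right hγ1.le hvpos.le
          _ = v := one_mul v
          _ ≤ 1 / 2 := hvle
      have hγvnn : 0 ≤ γ * v := mul_nonneg hγ0.le hvpos.le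
      have hA : γ ^ 2 * (u ^ 2 * e) ≤ γ ^ 2 * (4 * v ^ 2) :=
        mul_le_mul_of_nonneg_left B2 (sq_nonneg γ)
      have hB : γ * (-γ - 1) * (u * e) ≤ 0 :=
        mul_nonpos_of_nonpos_of_nonneg
          (mul_nonpos_of_nonneg_of_nonpos hγ0.le (by linarith)) hue
      have hC : γ ^ 2 * (4 * v ^ 2) ≤ 4 * γ * v := by
        have h1 : γ * v * (γ * v) ≤ γ * v * 1 :=
          mul_le_mul_of_nonneg_left (by linarith) hγvnn
        nlinarith [h1]
      have hB' : γ * (γ + 1) * (u * e) ≤ γ * (γ + 1) * v :=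
        mul_le_mul_of_nonneg_left B1 (mul_nonneg hγ0.le (by linarith))
      have hB'' : γ * (γ + 1) * v ≤ 4 * γ * v := by
        have h4 : γ * (γ + 1) ≤ γ * 4 := mul_le_mul_of_nonneg_left (by linarith) hγ0.le
        calc γ * (γ + 1) * v ≤ γ * 4 * v := mul_le_mul_of_nonneg_right h4 hvpos.le
          _ = 4 * γ * v := by ring
      have hA' : 0 ≤ γ ^ 2 * (u ^ 2 * e) := by positivity
      have hneg : γ * (-γ - 1) * (u * e) = -(γ * (γ + 1) * (u * e)) := by ring
      rw [abs_le]
      constructor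
      · rw [div_eq_mul_inv, ← hvdef]
        linarith
      · rw [div_eq_mul_inv, ← hvdef]
        linarith
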